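/- arXiv:1607.00819 — 7 statements merged into one kernel-verified Lean document; each statement's English description precedes it below -/
import Mathlib

section
/- Let (A, R, D) be a finite EAFC, let X ⊆ A be a conflict-free extension of (A, R, D), and suppose an argument a ∈ X defeats_X an argument b ∈ A. Then there is no reinstatement set for this defeat_X on X if and only if there exists a sequence ((Z_1,(x_1,y_1)),…,(Z_n,(x_n,y_n))) of distinct defense attacks from D such that: (x_n, y_n) = (a, b); no two pairs (x_i, y_i) and (x_j, y_j) with i ≠ j are equal; for every (Z_i,(x_i,y_i)) with 1 < i ≤ n, either no argument h ∈ X defeats_X any argument z ∈ Z_i, or for every such defeat there exists a set L ⊆ A with (L,(h,z)) ∈ {(Z_1,(x_1,y_1)),…,(Z_{i-1},(x_{i-1},y_{i-1}))}; and no argument in X defeats_X any argument in Z_1. -/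
open Classical

universe u

namespace Dialectical

variable {α : Type u}

/-! ### Two-valued (partial) interpretations -/

/-- A partial two-valued interpretation: `some true` = t, `some false` = f, `none` = undefined. -/
abbrev Interp (α : Type u) := α → Option Bool

/-- The domain of an interpretation. -/
def idom (v : Interp α) : Set α := {a | v a ≠ none}

/-- The set of arguments mapped to t. -/
def tset (v : Interp α) : Set α := {a | v a = some true}

/-- The set of arguments mapped to f. -/
def fset (v : Interp α) : Set α := {a | v a = some false}

/-- `w` is a completion of `v` to the set `Z`. -/
def Completion (v w : Interp α) (Z : Set α) : Prop :=
  idom w = Z ∧ ∀ a ∈ idom v, w a = v a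

/-- The interpretation assigning t on `T` and f on `F' \ T`. -/
noncomputable def mkInterp (T F' : Set α) : Interp α :=
  fun a => if a ∈ T then some true else if a ∈ F' then some false else none

/-! ### Abstract dialectical frameworks -/

/-- An abstract dialectical framework: links and acceptance conditions
(`true` = in, `false` = out). -/
structure ADF (α : Type u) where
  L : α → α → Prop
  C : α → Set α → Bool

namespace ADF

variable (D : ADF α)

/-- The parents of an argument. -/
def par (a : α) : Set α := {p | D.L p a}

/-- Evaluating the acceptance condition of `s` under an interpretation. -/
def evalCond (s : α) (w : Interp α) : Bool := D.C s (tset w ∩ D.par s)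

/-- `s` is decisively in w.r.t. `v`. -/
def DecisivelyIn (v : Interp α) (s : α) : Prop :=
  ∀ w : Interp α, Completion v w (idom v ∪ D.par s) → D.evalCond s w = true

/-- `s` is decisively out w.r.t. `v`. -/
def DecisivelyOut (v : Interp α) (s : α) : Prop :=
  ∀ w : Interp α, Completion v w (idom v ∪ D.par s) → D.evalCond s w = false

/-- `v` is a minimal decisively in interpretation for `s` (`v ∈ min_dec(in,s)`). -/
def MinDecIn (v : Interp α) (s : α) : Prop :=
  D.DecisivelyIn v s ∧
  ∀ w : Interp α, D.DecisivelyIn w s → tset w ⊆ tset v → fset w ⊆ fset v →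
    tset w = tset v ∧ fset w = fset v

/-- `pd` is a positive dependency function on `X`. -/
def PDFun (X : Set α) (pd : α → Option (Interp α)) : Prop :=
  ∀ a ∈ X,
    (∀ v, pd a = some v → D.MinDecIn v a ∧ tset v ⊆ X) ∧
    (pd a = none → ¬ ∃ v, D.MinDecIn v a ∧ tset v ⊆ X)

end ADF

/-- The subset of `X` on which `pd` is non-null. -/
def soundDom (X : Set α) (pd : α → Option (Interp α)) : Set α :=
  {a ∈ X | pd a ≠ none}

namespace ADF
variable (D : ADF α)

/-- `pd` is a maximally sound pd-function of `X`. -/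
def MaxSound (X : Set α) (pd : α → Option (Interp α)) : Prop :=
  D.PDFun X pd ∧
  ¬ ∃ (X'' : Set α) (pd' : α → Option (Interp α)),
      D.PDFun X'' pd' ∧ (∀ a ∈ X'', pd' a ≠ none) ∧
      soundDom X pd ⊂ X'' ∧ X'' ⊆ X ∧
      ∀ a ∈ soundDom X pd, pd' a = pd a

end ADF

/-- The t-part of the interpretation assigned by `pd` to `a`. -/
def pdT (pd : α → Option (Interp α)) (a : α) : Set α :=
  {b | ∃ v, pd a = some v ∧ b ∈ tset v}

/-- The f-part of the interpretation assigned by `pd` to `a`. -/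
def pdF (pd : α → Option (Interp α)) (a : α) : Set α :=
  {b | ∃ v, pd a = some v ∧ b ∈ fset v}

/-- `(Fs, G, B)` is a partially acyclic positive dependency evaluation for `x`
based on the pd-function `pd` of `X`. -/
def IsPAEvalWith (pd : α → Option (Interp α)) (X : Set α)
    (x : α) (Fs : Set α) (G : List α) (B : Set α) : Prop :=
  (∀ a ∈ G, a ∉ Fs) ∧ G.Nodup ∧
  x ∈ X ∧ Fs ⊆ X ∧ (∀ a ∈ G, a ∈ X) ∧
  (∀ a ∈ Fs, pd a ≠ none) ∧ (∀ a ∈ G, pd a ≠ none) ∧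
  (G = [] → x ∈ Fs) ∧ (G ≠ [] → G.getLast? = some x) ∧
  (∀ i : ℕ, ∀ h : i < G.length,
      pdT pd (G.get ⟨i, h⟩) ⊆
        Fs ∪ {b | ∃ j : ℕ, ∃ hj : j < G.length, j < i ∧ G.get ⟨j, hj⟩ = b}) ∧
  (∀ a ∈ Fs, pdT pd a ⊆ Fs) ∧
  (∀ a ∈ Fs, ∃ b ∈ Fs, a ∈ pdT pd b) ∧
  B = (⋃ a ∈ Fs, pdF pd a) ∪ ⋃ a ∈ {c | c ∈ G}, pdF pd a

namespace ADF
variable (D : ADF α)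

/-- `(Fs, G, B)` is a partially acyclic positive dependency evaluation for `x` on `X`. -/
def PAEval (X : Set α) (x : α) (Fs : Set α) (G : List α) (B : Set α) : Prop :=
  ∃ pd, D.MaxSound X pd ∧ IsPAEvalWith pd X x Fs G B

/-- `(G, B)` is an acyclic positive dependency evaluation for `x` on `X`. -/
def AcyclicEval (X : Set α) (x : α) (G : List α) (B : Set α) : Prop :=
  D.PAEval X x ∅ G B

/-- The standard discarded set `X⁺`. -/
def stdDiscarded (X : Set α) : Set α :=
  {a | ∀ Fs G B, D.PAEval Set.univ a Fs G B → (B ∩ X).Nonempty}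

/-- The partially acyclic discarded set `X^{p+}`. -/
def pDiscarded (X : Set α) : Set α :=
  {a | ¬ ∃ Fs G B, D.PAEval Set.univ a Fs G B ∧ Fs ⊆ X ∧ B ∩ X = ∅}

/-- The acyclic discarded set `X^{a+}`. -/
def aDiscarded (X : Set α) : Set α :=
  {a | ∀ G B, D.AcyclicEval Set.univ a G B → (B ∩ X).Nonempty}

/-- The standard range of `X`. -/
noncomputable def stdRange (X : Set α) : Interp α := mkInterp X (D.stdDiscarded X \ X)

/-- The partially acyclic range of `X`. -/
noncomputable def pRange (X : Set α) : Interp α := mkInterp X (D.pDiscarded X \ X)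

/-- The acyclic range of `X`. -/
noncomputable def aRange (X : Set α) : Interp α := mkInterp X (D.aDiscarded X \ X)

/-- Conflict-freeness in an ADF. -/
def ConflictFree (X : Set α) : Prop := ∀ s ∈ X, D.C s (X ∩ D.par s) = true

/-- pd-acyclic conflict-freeness in an ADF. -/
def PDAcyclicCF (X : Set α) : Prop :=
  ∀ a ∈ X, ∃ G B, D.AcyclicEval X a G B ∧ B ∩ X = ∅

def CCAdmissible (X : Set α) : Prop :=
  D.ConflictFree X ∧ ∀ e ∈ X, D.DecisivelyIn (D.stdRange X) e

def CA2Admissible (X : Set α) : Prop :=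
  D.ConflictFree X ∧ ∀ e ∈ X, D.DecisivelyIn (D.pRange X) e

def AAAdmissible (X : Set α) : Prop :=
  D.PDAcyclicCF X ∧ ∀ e ∈ X, D.DecisivelyIn (D.aRange X) e

def CCComplete (X : Set α) : Prop :=
  D.CCAdmissible X ∧ ∀ e, D.DecisivelyIn (D.stdRange X) e → e ∈ X

def CA2Complete (X : Set α) : Prop :=
  D.CA2Admissible X ∧ ∀ e, D.DecisivelyIn (D.pRange X) e → e ∈ X

def AAComplete (X : Set α) : Prop :=
  D.AAAdmissible X ∧ ∀ e, D.DecisivelyIn (D.aRange X) e → e ∈ X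

def CCPreferred (X : Set α) : Prop :=
  D.CCAdmissible X ∧ ∀ Y, D.CCAdmissible Y → X ⊆ Y → X = Y

def CA2Preferred (X : Set α) : Prop :=
  D.CA2Admissible X ∧ ∀ Y, D.CA2Admissible Y → X ⊆ Y → X = Y

def AAPreferred (X : Set α) : Prop :=
  D.AAAdmissible X ∧ ∀ Y, D.AAAdmissible Y → X ⊆ Y → X = Y

/-- `X` is a model of the ADF. -/
def IsModel (X : Set α) : Prop :=
  D.ConflictFree X ∧ ∀ a, a ∉ X → D.C a (X ∩ D.par a) = false

/-- `X` is a stable extension of the ADF. -/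
def IsStable (X : Set α) : Prop :=
  D.PDAcyclicCF X ∧ D.aDiscarded X = Xᶜ

/-- `X` is the grounded extension (the least cc-complete extension). -/
def IsGrounded (X : Set α) : Prop :=
  D.CCComplete X ∧ ∀ Y, D.CCComplete Y → X ⊆ Y

/-- `X` is the acyclic grounded extension (the least aa-complete extension). -/
def IsAcyclicGrounded (X : Set α) : Prop :=
  D.AAComplete X ∧ ∀ Y, D.AAComplete Y → X ⊆ Y

/-- The link `(r,s)` is supporting. -/
def Supporting (r s : α) : Prop :=
  ¬ ∃ R' ⊆ D.par s, D.C s R' = true ∧ D.C s (R' ∪ {r}) = false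

/-- The link `(r,s)` is attacking. -/
def Attacking (r s : α) : Prop :=
  ¬ ∃ R' ⊆ D.par s, D.C s R' = false ∧ D.C s (R' ∪ {r}) = true

/-- Bipolar ADFs. -/
def IsBADF : Prop := ∀ r s, D.L r s → D.Supporting r s ∨ D.Attacking r s

/-- Positive dependency acyclic ADFs (AADF⁺): every partially acyclic evaluation is acyclic. -/
def IsAADFplus : Prop := ∀ X x Fs G B, D.PAEval X x Fs G B → Fs = ∅

end ADF

/-! ### Frameworks with sets of attacking arguments (SETAFs) -/

/-- A framework with sets of attacking arguments. -/
structure SETAF (α : Type u) where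
  R : Set α → α → Prop
  nonempty_of_R : ∀ S a, R S a → S.Nonempty

namespace SETAF

variable (sf : SETAF α)

/-- `X` is conflict-free in the SETAF. -/
def ConflictFree (X : Set α) : Prop := ¬ ∃ S ⊆ X, ∃ a ∈ X, sf.R S a

/-- The discarded set of `X` in the SETAF. -/
def discarded (X : Set α) : Set α := {b | ∃ S ⊆ X, sf.R S b}

/-- `X` defends `a` in the SETAF. -/
def Defends (X : Set α) (a : α) : Prop :=
  ∀ S, sf.R S a → ∃ s ∈ S, s ∈ sf.discarded X

def Admissible (X : Set α) : Prop := sf.ConflictFree X ∧ ∀ a ∈ X, sf.Defends X a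

def Complete (X : Set α) : Prop := sf.Admissible X ∧ ∀ a, sf.Defends X a → a ∈ X

def Preferred (X : Set α) : Prop :=
  sf.Admissible X ∧ ∀ Y, sf.Admissible Y → X ⊆ Y → X = Y

/-- `X` is the grounded extension: the least complete extension. -/
def IsGrounded (X : Set α) : Prop := sf.Complete X ∧ ∀ Y, sf.Complete Y → X ⊆ Y

def Stable (X : Set α) : Prop := sf.ConflictFree X ∧ sf.discarded X = Xᶜ

/-- The ADF corresponding to a SETAF. -/
noncomputable def toADF : ADF α where
  L x y := ∃ B : Set α, x ∈ B ∧ sf.R B y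
  C a B := decide (¬ ∃ S, sf.R S a ∧ S ⊆ B)

end SETAF

/-! ### Extended argumentation frameworks with collective defense attacks (EAFCs) -/

/-- An EAFC: binary attacks `R` and collective defense attacks `D` on attacks. -/
structure EAFC (α : Type u) where
  R : α → α → Prop
  D : Set α → α → α → Prop
  nonempty_of_D : ∀ C a b, D C a b → C.Nonempty
  attack_of_D : ∀ C a b, D C a b → R a b

namespace EAFC

variable (E : EAFC α)

/-- `a` defeats `b` w.r.t. `X`. -/
def Defeats (X : Set α) (a b : α) : Prop :=
  E.R a b ∧ ¬ ∃ C ⊆ X, E.D C a b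

/-- `RS` is a reinstatement set on `X` for the defeat of `b` by `a`. -/
def Reinstatement (X : Set α) (RS : Set (α × α)) (a b : α) : Prop :=
  RS.Finite ∧
  (∀ p ∈ RS, p.1 ∈ X ∧ E.Defeats X p.1 p.2) ∧
  (a, b) ∈ RS ∧
  ∀ p ∈ RS, ∀ C : Set α, E.D C p.1 p.2 → ∃ q ∈ RS, q.2 ∈ C

/-- The discarded set `X⁺` of `X` in the EAFC. -/
def discarded (X : Set α) : Set α :=
  {b | ∃ a ∈ X, E.Defeats X a b ∧ ∃ RS, E.Reinstatement X RS a b}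

/-- `X` defends `a` in the EAFC. -/
def Defends (X : Set α) (a : α) : Prop :=
  ∀ b, E.Defeats X b a → b ∈ E.discarded X

/-- `X` is conflict-free in the EAFC. -/
def ConflictFree (X : Set α) : Prop := ¬ ∃ a ∈ X, ∃ b ∈ X, E.Defeats X a b

def Admissible (X : Set α) : Prop := E.ConflictFree X ∧ ∀ a ∈ X, E.Defends X a

def Complete (X : Set α) : Prop := E.Admissible X ∧ ∀ a, E.Defends X a → a ∈ X

def Preferred (X : Set α) : Prop :=
  E.Admissible X ∧ ∀ Y, E.Admissible Y → X ⊆ Y → X = Y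

def Stable (X : Set α) : Prop :=
  E.ConflictFree X ∧ ∀ b, b ∉ X → ∃ a ∈ X, E.Defeats X a b

/-- The characteristic function of the EAFC. -/
def charFun (X : Set α) : Set α := {a | E.Defends X a}

/-- The grounded extension of the EAFC. -/
def grounded : Set α := ⋃ i : ℕ, E.charFun^[i] ∅

/-- Every argument has finitely many attackers, every attack finitely many defense attackers. -/
def Finitary : Prop :=
  (∀ a, {b | E.R b a}.Finite) ∧ ∀ a b, {C | E.D C a b}.Finite

/-- Strong consistency of an EAFC. -/
def StronglyConsistent : Prop :=
  ¬ ∃ (x y z : α) (X : Set α), E.R x y ∧ x ∈ X ∧ E.D X z y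

/-- The EAFC is bounded hierarchical. -/
def BoundedHierarchical : Prop :=
  ∃ n : ℕ, ∃ hn : 0 < n,
    ∃ (As : Fin n → Set α) (Rs : Fin n → α → α → Prop)
      (Ds : Fin n → Set α → α → α → Prop),
      (∀ C a b, ¬ Ds ⟨n - 1, Nat.sub_lt hn one_pos⟩ C a b) ∧
      (Set.univ = ⋃ i, As i) ∧
      (∀ a b, E.R a b ↔ ∃ i, Rs i a b) ∧
      (∀ C a b, E.D C a b ↔ ∃ i, Ds i C a b) ∧
      (∀ i a b, Rs i a b → a ∈ As i ∧ b ∈ As i) ∧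
      (∀ i C a b, Ds i C a b → Rs i a b ∧
        ∃ h : (i : ℕ) + 1 < n, C ⊆ As ⟨(i : ℕ) + 1, h⟩)

/-- The ADF corresponding to a strongly consistent EAFC. -/
noncomputable def toADF : ADF α where
  L a b := E.R a b ∨ ∃ (c : α) (X : Set α), a ∈ X ∧ E.D X c b
  C a B := decide (¬ ∃ x ∈ B, E.R x a ∧ ¬ ∃ B' ⊆ B, E.D B' x a)

end EAFC

/-! ### Argumentation frameworks with necessities (AFNs) -/

/-- An AFN: binary attacks `R` and necessity relation `N`. -/
structure AFN (α : Type u) where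
  R : α → α → Prop
  N : Set α → α → Prop
  nonempty_of_N : ∀ B a, N B a → B.Nonempty

namespace AFN

variable (fn : AFN α)

/-- `G` is a powerful sequence for `a` on `X`. -/
def PowerfulSeq (X : Set α) (G : List α) (a : α) : Prop :=
  G ≠ [] ∧ (∀ b ∈ G, b ∈ X) ∧ G.getLast? = some a ∧
  ∀ i : ℕ, ∀ h : i < G.length, ∀ B : Set α, fn.N B (G.get ⟨i, h⟩) →
    ∃ j : ℕ, ∃ hj : j < G.length, j < i ∧ G.get ⟨j, hj⟩ ∈ B

/-- `a` is powerful in `X`. -/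
def Powerful (X : Set α) (a : α) : Prop :=
  a ∈ X ∧ ∃ G, fn.PowerfulSeq X G a

/-- `X` is coherent. -/
def Coherent (X : Set α) : Prop := ∀ a ∈ X, fn.Powerful X a

/-- The discarded set `X^att` of `X` in the AFN. -/
def discardedAtt (X : Set α) : Set α :=
  {a | ∀ C, fn.Coherent C → a ∈ C → ∃ c ∈ C, ∃ e ∈ X, fn.R e c}

/-- `X` is conflict-free in the AFN. -/
def ConflictFree (X : Set α) : Prop := ¬ ∃ a ∈ X, ∃ b ∈ X, fn.R a b

/-- `X` is strongly coherent. -/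
def StronglyCoherent (X : Set α) : Prop := fn.ConflictFree X ∧ fn.Coherent X

/-- The deactivated set `X⁺` of `X` in the AFN. -/
def deactivated (X : Set α) : Set α :=
  {a | (∃ e ∈ X, fn.R e a) ∨ ∃ B, fn.N B a ∧ X ∩ B = ∅}

/-- `X` defends `a` in the AFN. -/
def Defends (X : Set α) (a : α) : Prop :=
  fn.Coherent (X ∪ {a}) ∧ ∀ b, fn.R b a → b ∈ fn.discardedAtt X

def Admissible (X : Set α) : Prop := fn.StronglyCoherent X ∧ ∀ a ∈ X, fn.Defends X a

def Complete (X : Set α) : Prop := fn.Admissible X ∧ ∀ a, fn.Defends X a → a ∈ X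

def Preferred (X : Set α) : Prop :=
  fn.Admissible X ∧ ∀ Y, fn.Admissible Y → X ⊆ Y → X = Y

/-- `X` is the grounded extension: the least complete extension. -/
def IsGrounded (X : Set α) : Prop := fn.Complete X ∧ ∀ Y, fn.Complete Y → X ⊆ Y

/-- Stability via completeness and the deactivated set. -/
def Stable (X : Set α) : Prop := fn.Complete X ∧ fn.deactivated X = Xᶜ

/-- Stability via strong coherence and the discarded set. -/
def StableAtt (X : Set α) : Prop :=
  fn.StronglyCoherent X ∧ fn.discardedAtt X = Xᶜ

/-- Strong consistency of an AFN: no argument is both supported and attacked by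
the same argument. -/
def StronglyConsistent : Prop :=
  ∀ a : α, {b | ∃ B, b ∈ B ∧ fn.N B a} ∩ {b | fn.R b a} = ∅

/-- The ADF corresponding to a strongly consistent AFN. -/
noncomputable def toADF : ADF α where
  L x y := fn.R x y ∨ ∃ B, x ∈ B ∧ fn.N B y
  C a P := decide (¬ ((∃ p ∈ P, fn.R p a) ∨ ∃ Z, fn.N Z a ∧ Z ∩ P = ∅))

end AFN

end Dialectical


open Dialectical

namespace EAFCSeqAux

variable {α : Type} [Fintype α]

/-- Pairs `(h, z)` with `h ∈ X` defeating `z` w.r.t. `X`. -/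
def Defeated (E : EAFC α) (X : Set α) : Set (α × α) :=
  {p | p.1 ∈ X ∧ E.Defeats X p.1 p.2}

/-- The defeats that can be "killed" within `n` rounds of removal. -/
def Bad (E : EAFC α) (X : Set α) : ℕ → Set (α × α)
  | 0 => ∅
  | n + 1 => {p | p ∈ Defeated E X ∧ ∃ C, E.D C p.1 p.2 ∧
      ∀ q ∈ Defeated E X, q.2 ∈ C → q ∈ Bad E X n}

lemma bad_succ (E : EAFC α) (X : Set α) : ∀ n, Bad E X n ⊆ Bad E X (n + 1) := by
  intro n
  induction n with
  | zero => intro p hp; exact absurd hp (Set.notMem_empty p)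
  | succ n ih =>
    rintro p ⟨hp, C, hC, hq⟩
    exact ⟨hp, C, hC, fun q hq1 hq2 => ih (hq q hq1 hq2)⟩

lemma bad_mono (E : EAFC α) (X : Set α) {m n : ℕ} (h : m ≤ n) :
    Bad E X m ⊆ Bad E X n := by
  induction h with
  | refl => exact subset_rfl
  | step _ ih => exact ih.trans (bad_succ E X _)

lemma bad_subset (E : EAFC α) (X : Set α) : ∀ n, Bad E X n ⊆ Defeated E X := by
  intro n
  cases n with
  | zero => intro p hp; exact absurd hp (Set.notMem_empty p)
  | succ n => rintro p ⟨hp, _⟩; exact hp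

/-- All killable defeats. -/
def BadAll (E : EAFC α) (X : Set α) : Set (α × α) := {p | ∃ n, p ∈ Bad E X n}

/-- Rank of a killable defeat. -/
noncomputable def rank (E : EAFC α) (X : Set α) (p : α × α) : ℕ :=
  sInf {n | p ∈ Bad E X n}

lemma mem_bad_rank {E : EAFC α} {X : Set α} {p : α × α} (h : p ∈ BadAll E X) :
    p ∈ Bad E X (rank E X p) := Nat.sInf_mem h

lemma rank_le {E : EAFC α} {X : Set α} {p : α × α} {m : ℕ} (h : p ∈ Bad E X m) :
    rank E X p ≤ m := Nat.sInf_le h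

lemma rank_pos {E : EAFC α} {X : Set α} {p : α × α} (h : p ∈ BadAll E X) :
    0 < rank E X p := by
  rcases Nat.eq_zero_or_pos (rank E X p) with h0 | h0
  · have := mem_bad_rank h
    rw [h0] at this
    exact absurd this (Set.notMem_empty p)
  · exact h0

/-- Extraction of a defense attack witness for a killable defeat. -/
lemma exists_witness {E : EAFC α} {X : Set α} {p : α × α} (h : p ∈ BadAll E X) :
    ∃ C, E.D C p.1 p.2 ∧ ∀ q ∈ Defeated E X, q.2 ∈ C →
      (q ∈ BadAll E X ∧ rank E X q < rank E X p) := by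
  have hmem := mem_bad_rank h
  obtain ⟨k, hk⟩ := Nat.exists_eq_add_of_lt (rank_pos h)
  rw [show rank E X p = k + 1 by omega] at hmem
  obtain ⟨-, C, hC, hq⟩ := hmem
  refine ⟨C, hC, fun q hq1 hq2 => ?_⟩
  have hqk := hq q hq1 hq2
  exact ⟨⟨k, hqk⟩, by have := rank_le hqk; omega⟩

/-- If `(a,b)` is not killable, the unkillable defeats form a reinstatement set. -/
lemma reinstatement_of_not_badAll {E : EAFC α} {X : Set α} {a b : α}
    (ha : a ∈ X) (hdef : E.Defeats X a b) (h : (a, b) ∉ BadAll E X) :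
    E.Reinstatement X (Defeated E X \ BadAll E X) a b := by
  classical
  refine ⟨Set.toFinite _, fun p hp => hp.1, ⟨⟨ha, hdef⟩, h⟩, ?_⟩
  rintro p ⟨hpd, hpb⟩ C hC
  by_contra hno
  push_neg at hno
  -- every defeated pair whose target is in C is killable; take a uniform bound
  set N := Finset.univ.sup (rank E X) with hN
  have hbig : ∀ q ∈ Defeated E X, q.2 ∈ C → q ∈ Bad E X N := by
    intro q hq1 hq2
    have hqb : q ∈ BadAll E X := by
      by_contra hqb
      exact hno q ⟨hq1, hqb⟩ hq2
    exact bad_mono E X (Finset.le_sup (Finset.mem_univ q)) (mem_bad_rank hqb)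
  exact hpb ⟨N + 1, hpd, C, hC, hbig⟩

/-- Main construction: a killable defeat yields a defense-attack sequence. -/
lemma exists_seq {E : EAFC α} {X : Set α} {a b : α}
    (hab : (a, b) ∈ BadAll E X) :
    ∃ (n : ℕ) (Z : Fin (n + 1) → Set α) (x y : Fin (n + 1) → α),
      (∀ i, E.D (Z i) (x i) (y i)) ∧
      Function.Injective (fun i => (Z i, x i, y i)) ∧
      x (Fin.last n) = a ∧ y (Fin.last n) = b ∧
      Function.Injective (fun i => (x i, y i)) ∧
      (∀ i : Fin (n + 1), 0 < (i : ℕ) →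
        (¬ ∃ h ∈ X, ∃ z ∈ Z i, E.Defeats X h z) ∨
        (∀ h ∈ X, ∀ z ∈ Z i, E.Defeats X h z →
          ∃ L : Set α, ∃ j : Fin (n + 1), (j : ℕ) < (i : ℕ) ∧
            Z j = L ∧ x j = h ∧ y j = z)) ∧
      ¬ ∃ h ∈ X, ∃ z ∈ Z 0, E.Defeats X h z := by
  classical
  -- choose a defense attack witness for every killable pair
  have hW : ∀ p : α × α, ∃ C, p ∈ BadAll E X →
      (E.D C p.1 p.2 ∧ ∀ q ∈ Defeated E X, q.2 ∈ C →
        (q ∈ BadAll E X ∧ rank E X q < rank E X p)) := by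
    intro p
    by_cases hp : p ∈ BadAll E X
    · obtain ⟨C, hC⟩ := exists_witness hp
      exact ⟨C, fun _ => hC⟩
    · exact ⟨∅, fun h => absurd h hp⟩
  choose Cw hCw using hW
  set r : α × α → ℕ := rank E X with hr
  set R : ℕ := r (a, b) with hR
  -- all killable pairs of rank below R, sorted by rank
  set S : Finset (α × α) :=
    Finset.univ.filter (fun p => p ∈ BadAll E X ∧ r p < R) with hS
  set rel : α × α → α × α → Prop := fun p q => r p ≤ r q with hrel
  haveI : DecidableRel rel := fun p q => Nat.decLe _ _
  haveI htot : IsTotal (α × α) rel := ⟨fun p q => Nat.le_total _ _⟩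
  haveI htrans : IsTrans (α × α) rel := ⟨fun p q s => Nat.le_trans⟩
  set l0 : List (α × α) := List.insertionSort rel S.toList with hl0
  have hperm : List.Perm l0 S.toList := List.perm_insertionSort rel S.toList
  have hmem0 : ∀ p : α × α, p ∈ l0 ↔ (p ∈ BadAll E X ∧ r p < R) := by
    intro p
    rw [hperm.mem_iff, Finset.mem_toList, hS, Finset.mem_filter]
    simp
  have hnd0 : l0.Nodup := hperm.nodup_iff.mpr S.nodup_toList
  have habn0 : (a, b) ∉ l0 := by
    rw [hmem0]
    rintro ⟨-, hlt⟩
    exact lt_irrefl _ hlt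
  set l : List (α × α) := l0 ++ [(a, b)] with hl
  have hnd : l.Nodup := by
    refine hnd0.append (List.nodup_singleton _) ?_
    intro p hp1 hp2
    rw [List.mem_singleton] at hp2
    subst hp2
    exact habn0 hp1
  have hsorted : l.Pairwise rel := by
    rw [hl, List.pairwise_append]
    refine ⟨List.pairwise_insertionSort rel S.toList, List.pairwise_singleton _ _, ?_⟩
    intro p hp q hq
    rw [List.mem_singleton] at hq
    subst hq
    exact le_of_lt ((hmem0 p).mp hp).2
  set n : ℕ := l0.length with hn
  have hlen : l.length = n + 1 := by simp [hl, hn]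
  set g : Fin (n + 1) → α × α := fun i => l.get (Fin.cast hlen.symm i) with hg
  have ginj : Function.Injective g := by
    intro i j hij
    have := List.nodup_iff_injective_get.mp hnd hij
    exact Fin.cast_injective _ this
  have gmem : ∀ i, g i ∈ l := fun i => List.get_mem l _
  have gBad : ∀ i, g i ∈ BadAll E X := by
    intro i
    rcases List.mem_append.mp (gmem i) with h1 | h1
    · exact ((hmem0 _).mp h1).1
    · rw [List.mem_singleton] at h1; rw [h1]; exact hab
  have grle : ∀ i, r (g i) ≤ R := by
    intro i
    rcases List.mem_append.mp (gmem i) with h1 | h1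
    · exact le_of_lt ((hmem0 _).mp h1).2
    · rw [List.mem_singleton] at h1; rw [h1]
  have glast : g (Fin.last n) = (a, b) := by
    show l.get _ = (a, b)
    have : (l0 ++ [(a, b)])[l0.length]'(by simp) = (a, b) :=
      List.getElem_concat_length rfl _
    simpa [hl, hn, List.get_eq_getElem] using this
  -- ordering: strictly smaller rank means strictly earlier index
  have key : ∀ i j : Fin (n + 1), r (g j) < r (g i) → (j : ℕ) < (i : ℕ) := by
    intro i j hlt
    by_contra hc
    push_neg at hc
    rcases lt_or_eq_of_le hc with h1 | h1
    · have := List.pairwise_iff_get.mp hsorted (Fin.cast hlen.symm i) (Fin.cast hlen.symm j) h1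
      exact absurd hlt (not_lt.mpr this)
    · have : i = j := Fin.ext h1.symm ▸ rfl
      rw [Fin.ext h1] at hlt
      exact lt_irrefl _ hlt
  -- every defeat into a chosen witness set occurs strictly earlier
  have hcount : ∀ i : Fin (n + 1), ∀ h ∈ X, ∀ z ∈ Cw (g i), E.Defeats X h z →
      ∃ j : Fin (n + 1), (j : ℕ) < (i : ℕ) ∧ g j = (h, z) := by
    intro i h hX z hz hhz
    have hq : (h, z) ∈ Defeated E X := ⟨hX, hhz⟩
    have := (hCw (g i) (gBad i)).2 (h, z) hq hz
    have hqm : (h, z) ∈ l0 := (hmem0 _).mpr ⟨this.1, lt_of_lt_of_le this.2 (grle i)⟩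
    have hql : (h, z) ∈ l := List.mem_append.mpr (Or.inl hqm)
    obtain ⟨k, hk⟩ := List.mem_iff_get.mp hql
    refine ⟨Fin.cast hlen k, key i (Fin.cast hlen k) ?_, ?_⟩
    · show r (l.get _) < _
      rw [show (Fin.cast hlen.symm (Fin.cast hlen k)) = k from Fin.ext rfl, hk]
      exact this.2
    · show l.get _ = (h, z)
      rw [show (Fin.cast hlen.symm (Fin.cast hlen k)) = k from Fin.ext rfl, hk]
  refine ⟨n, fun i => Cw (g i), fun i => (g i).1, fun i => (g i).2,
    fun i => (hCw (g i) (gBad i)).1, ?_, ?_, ?_, ?_, ?_, ?_⟩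
  · intro i j hij
    apply ginj
    have h1 : (g i).1 = (g j).1 := congrArg (fun t => t.2.1) hij
    have h2 : (g i).2 = (g j).2 := congrArg (fun t => t.2.2) hij
    exact Prod.ext h1 h2
  · show (g (Fin.last n)).1 = a
    rw [glast]
  · show (g (Fin.last n)).2 = b
    rw [glast]
  · intro i j hij
    apply ginj
    have h1 : (g i).1 = (g j).1 := congrArg Prod.fst hij
    have h2 : (g i).2 = (g j).2 := congrArg Prod.snd hij
    exact Prod.ext h1 h2
  · intro i _
    right
    intro h hX z hz hhz
    obtain ⟨j, hji, hj⟩ := hcount i h hX z hz hhz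
    exact ⟨Cw (g j), j, hji, rfl, by show (g j).1 = h; rw [hj], by show (g j).2 = z; rw [hj]⟩
  · rintro ⟨h, hX, z, hz, hhz⟩
    obtain ⟨j, hji, -⟩ := hcount 0 h hX z hz hhz
    exact Nat.not_lt_zero _ hji

end EAFCSeqAux


open Dialectical in
/-- characterization of the absence of a reinstatement set in a finite EAFC
via sequences of defense attacks. -/
theorem eafc_no_reinstatement_iff_defense_attack_sequence
    {α : Type} [Fintype α] (E : EAFC α) (X : Set α)
    (hcf : E.ConflictFree X) (a b : α) (ha : a ∈ X) (hdef : E.Defeats X a b) :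
    (¬ ∃ RS : Set (α × α), E.Reinstatement X RS a b) ↔
      ∃ (n : ℕ) (Z : Fin (n + 1) → Set α) (x y : Fin (n + 1) → α),
        (∀ i, E.D (Z i) (x i) (y i)) ∧
        Function.Injective (fun i => (Z i, x i, y i)) ∧
        x (Fin.last n) = a ∧ y (Fin.last n) = b ∧
        Function.Injective (fun i => (x i, y i)) ∧
        (∀ i : Fin (n + 1), 0 < (i : ℕ) →
          (¬ ∃ h ∈ X, ∃ z ∈ Z i, E.Defeats X h z) ∨
          (∀ h ∈ X, ∀ z ∈ Z i, E.Defeats X h z →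
            ∃ L : Set α, ∃ j : Fin (n + 1), (j : ℕ) < (i : ℕ) ∧
              Z j = L ∧ x j = h ∧ y j = z)) ∧
        ¬ ∃ h ∈ X, ∃ z ∈ Z 0, E.Defeats X h z := by
  
  classical
  constructor
  · intro hno
    have hab : (a, b) ∈ EAFCSeqAux.BadAll E X := by
      by_contra h
      exact hno ⟨_, EAFCSeqAux.reinstatement_of_not_badAll ha hdef h⟩
    exact EAFCSeqAux.exists_seq hab
  · rintro ⟨n, Z, x, y, hD, -, hxa, hyb, -, hmid, h0⟩ ⟨RS, hfin, hmem, habm, hclos⟩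
    have key : ∀ m, ∀ i : Fin (n + 1), (i : ℕ) ≤ m → ∀ q ∈ RS, q.2 ∉ Z i := by
      intro m
      induction m with
      | zero =>
        intro i hi q hq hz
        have hi0 : i = 0 := Fin.ext (Nat.le_zero.mp hi)
        subst hi0
        exact h0 ⟨q.1, (hmem q hq).1, q.2, hz, (hmem q hq).2⟩
      | succ m ih =>
        intro i hi q hq hz
        rcases Nat.eq_zero_or_pos (i : ℕ) with h1 | h1
        · have hi0 : i = 0 := Fin.ext h1
          subst hi0
          exact h0 ⟨q.1, (hmem q hq).1, q.2, hz, (hmem q hq).2⟩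
        · rcases hmid i h1 with hneg | hall
          · exact hneg ⟨q.1, (hmem q hq).1, q.2, hz, (hmem q hq).2⟩
          · obtain ⟨L, j, hji, hZj, hxj, hyj⟩ :=
              hall q.1 (hmem q hq).1 q.2 hz (hmem q hq).2
            have hDj := hD j
            rw [hxj, hyj] at hDj
            obtain ⟨q', hq', hq'z⟩ := hclos q hq (Z j) hDj
            exact ih j (by omega) q' hq' hq'z
    have hDl := hD (Fin.last n)
    rw [hxa, hyb] at hDl
    obtain ⟨q, hq, hqz⟩ := hclos (a, b) habm (Z (Fin.last n)) hDl
    exact key n (Fin.last n) (by simp) q hq hqz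
end

section
/- Let (A, R, N) be an AFN and let X ⊆ A be a strongly coherent set. Then X^att ⊆ X^+, i.e. the discarded set of X is contained in the deactivated set of X. -/
open Classical

universe u

namespace AuxAFN

open Dialectical

variable {α : Type u} (fn : AFN α)

def Good (X : Set α) (G : List α) : Prop :=
  (∀ b ∈ G, b ∈ X) ∧
  ∀ i : ℕ, ∀ h : i < G.length, ∀ B : Set α, fn.N B G[i] →
    ∃ j : ℕ, ∃ hj : j < G.length, j < i ∧ G[j] ∈ B

lemma good_of_powerful {X : Set α} {G : List α} {a : α}
    (h : fn.PowerfulSeq X G a) : Good fn X G := by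
  refine ⟨h.2.1, fun i hi B hB => ?_⟩
  obtain ⟨j, hj, hji, hjB⟩ := h.2.2.2 i hi B (by simpa using hB)
  exact ⟨j, hj, hji, by simpa using hjB⟩

lemma good_append {X : Set α} {G₁ G₂ : List α}
    (h₁ : Good fn X G₁) (h₂ : Good fn X G₂) : Good fn X (G₁ ++ G₂) := by
  constructor
  · intro b hb; rcases List.mem_append.1 hb with hb | hb
    exacts [h₁.1 b hb, h₂.1 b hb]
  · intro i hi B hB
    by_cases hlt : i < G₁.length
    · rw [List.getElem_append_left hlt] at hB
      obtain ⟨j, hj, hji, hjB⟩ := h₁.2 i hlt B hB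
      refine ⟨j, by simp; omega, hji, ?_⟩
      rw [List.getElem_append_left hj]; exact hjB
    · push_neg at hlt
      have hi' : i - G₁.length < G₂.length := by simp at hi; omega
      rw [List.getElem_append_right hlt] at hB
      obtain ⟨j, hj, hji, hjB⟩ := h₂.2 _ hi' B hB
      refine ⟨j + G₁.length, by simp; omega, by omega, ?_⟩
      rw [List.getElem_append_right (by omega)]
      simpa using hjB

lemma exists_covering {X : Set α} (hX : fn.Coherent X) :
    ∀ L : List α, (∀ b ∈ L, b ∈ X) → ∃ G, Good fn X G ∧ ∀ b ∈ L, b ∈ G := by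
  intro L
  induction L with
  | nil => intro _; exact ⟨[], ⟨by simp, by simp⟩, by simp⟩
  | cons b L ih =>
    intro hL
    obtain ⟨G, hG, hcov⟩ := ih (fun c hc => hL c (List.mem_cons_of_mem _ hc))
    obtain ⟨_, Gb, hGb⟩ := hX b (hL b List.mem_cons_self)
    refine ⟨Gb ++ G, good_append fn (good_of_powerful fn hGb) hG, ?_⟩
    intro c hc
    rcases List.mem_cons.1 hc with rfl | hc
    · refine List.mem_append.2 (Or.inl ?_)
      have hne := hGb.1
      have h1 := hGb.2.2.1
      rw [List.getLast?_eq_getLast hne] at h1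
      have h2 := Option.some_injective _ h1
      rw [← h2]; exact List.getLast_mem hne
    · exact List.mem_append.2 (Or.inr (hcov c hc))

lemma good_mono {X Y : Set α} (hXY : X ⊆ Y) {G : List α}
    (h : Good fn X G) : Good fn Y G :=
  ⟨fun b hb => hXY (h.1 b hb), h.2⟩

end AuxAFN

open Dialectical AuxAFN in
/-- in an AFN, for strongly coherent `X`, the discarded set `X^att` is
contained in the deactivated set `X⁺`. -/
theorem afn_discarded_subset_deactivated
    {α : Type} [Fintype α] (fn : AFN α) (X : Set α)
    (h : fn.StronglyCoherent X) :
    fn.discardedAtt X ⊆ fn.deactivated X := by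
  intro a ha
  by_contra hna
  simp only [AFN.deactivated, Set.mem_setOf_eq, not_or, not_exists] at hna
  obtain ⟨hnatt, hnec⟩ := hna
  push_neg at hnatt
  -- a covering Good list for X
  obtain ⟨G, hG, hcov⟩ := exists_covering fn h.2 (Set.toFinite X).toFinset.toList
    (fun b hb => (Set.Finite.mem_toFinset _).1 (Finset.mem_toList.1 hb))
  have hcov' : ∀ b ∈ X, b ∈ G := fun b hb =>
    hcov b (Finset.mem_toList.2 ((Set.Finite.mem_toFinset (Set.toFinite X)).2 hb))
  -- C = X ∪ {a} is coherent
  set C : Set α := X ∪ {a} with hC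
  have hsub : X ⊆ C := Set.subset_union_left
  have haC : a ∈ C := Or.inr rfl
  -- powerful sequence for a in C
  have hGa : fn.PowerfulSeq C (G ++ [a]) a := by
    refine ⟨by simp, ?_, by simp, ?_⟩
    · intro b hb
      rcases List.mem_append.1 hb with hb | hb
      · exact hsub (hG.1 b hb)
      · simp at hb; subst hb; exact haC
    · intro i hi B hB
      simp only [List.get_eq_getElem] at hB ⊢
      by_cases hlt : i < G.length
      · rw [List.getElem_append_left hlt] at hB
        obtain ⟨j, hj, hji, hjB⟩ := hG.2 i hlt B hB
        refine ⟨j, by simp; omega, hji, ?_⟩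
        rw [List.getElem_append_left hj]; exact hjB
      · have hieq : i = G.length := by simp at hi; omega
        have : (G ++ [a])[i] = a := by
          rw [List.getElem_append_right (by omega)]; simp [hieq]
        rw [this] at hB
        have hXB : X ∩ B ≠ ∅ := fun he => (hnec B) ⟨hB, he⟩
        obtain ⟨b, hbX, hbB⟩ := Set.nonempty_iff_ne_empty.2 hXB
        obtain ⟨j, hj, rfl⟩ := List.mem_iff_getElem.1 (hcov' b hbX)
        refine ⟨j, by simp; omega, by omega, ?_⟩
        rw [List.getElem_append_left hj]; exact hbB
  have hcoh : fn.Coherent C := by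
    intro c hc
    rcases hc with hc | hc
    · obtain ⟨_, Gc, hGc⟩ := h.2 c hc
      exact ⟨Or.inl hc, Gc, hGc.1, fun b hb => hsub (hGc.2.1 b hb), hGc.2.2⟩
    · simp only [Set.mem_singleton_iff] at hc; subst hc
      exact ⟨haC, _, hGa⟩
  obtain ⟨c, hcC, e, heX, hRec⟩ := ha C hcoh haC
  rcases hcC with hcX | hcA
  · exact h.1 ⟨e, heX, c, hcX, hRec⟩
  · simp only [Set.mem_singleton_iff] at hcA; subst hcA
    exact hnatt e heX hRec
end

section
/- Let (A, R, N) be an AFN. A set X ⊆ A is a stable extension of (A, R, N) (i.e. X is complete and X^+ = A \ X) if and only if X is strongly coherent and X^att = A \ X. -/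
open Classical

universe u

namespace Dialectical
namespace AFN

variable {α : Type} (fn : AFN α)

/-- A list satisfying the "powerful prefix" condition on `X` (no last/nonempty reqs). -/
def Pow (X : Set α) (G : List α) : Prop :=
  (∀ b ∈ G, b ∈ X) ∧
  ∀ i : ℕ, ∀ h : i < G.length, ∀ B : Set α, fn.N B (G.get ⟨i, h⟩) →
    ∃ j : ℕ, ∃ hj : j < G.length, j < i ∧ G.get ⟨j, hj⟩ ∈ B

lemma pow_of_powerfulSeq {X : Set α} {G : List α} {a : α}
    (h : fn.PowerfulSeq X G a) : fn.Pow X G :=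
  ⟨h.2.1, h.2.2.2⟩

lemma pow_append {X : Set α} {G1 G2 : List α}
    (h1 : fn.Pow X G1) (h2 : fn.Pow X G2) : fn.Pow X (G1 ++ G2) := by
  constructor
  · intro b hb
    rcases List.mem_append.1 hb with h | h
    · exact h1.1 b h
    · exact h2.1 b h
  · intro i h B hB
    by_cases hi : i < G1.length
    · have hget : (G1 ++ G2).get ⟨i, h⟩ = G1.get ⟨i, hi⟩ := by
        simp [List.get_eq_getElem, List.getElem_append_left hi]
      rw [hget] at hB
      obtain ⟨j, hj, hji, hjB⟩ := h1.2 i hi B hB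
      refine ⟨j, by simp; omega, hji, ?_⟩
      simp [List.get_eq_getElem, List.getElem_append_left (by omega : j < G1.length)]
      simpa [List.get_eq_getElem] using hjB
    · push_neg at hi
      have hlen : i < G1.length + G2.length := by simpa using h
      have hi2 : i - G1.length < G2.length := by omega
      have hget : (G1 ++ G2).get ⟨i, h⟩ = G2.get ⟨i - G1.length, hi2⟩ := by
        simp [List.get_eq_getElem, List.getElem_append_right hi]
      rw [hget] at hB
      obtain ⟨j, hj, hji, hjB⟩ := h2.2 (i - G1.length) hi2 B hB
      refine ⟨G1.length + j, by simp; omega, by omega, ?_⟩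
      have hj' : ¬ G1.length + j < G1.length := by omega
      simp only [List.get_eq_getElem, List.getElem_append_right (by omega : G1.length ≤ G1.length + j)]
      simpa [List.get_eq_getElem, Nat.add_sub_cancel_left] using hjB

/-- Over a finite type, a coherent set admits a single list covering it which
satisfies the powerful prefix condition. -/
lemma coherent_exists_enum [Fintype α] {X : Set α} (hX : fn.Coherent X) :
    ∃ L : List α, fn.Pow X L ∧ ∀ x ∈ X, x ∈ L := by
  classical
  suffices h : ∀ s : Finset α, ∃ L : List α, fn.Pow X L ∧ ∀ x ∈ s, x ∈ X → x ∈ L by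
    obtain ⟨L, hL, hmem⟩ := h Finset.univ
    exact ⟨L, hL, fun x hx => hmem x (Finset.mem_univ x) hx⟩
  intro s
  induction s using Finset.induction_on with
  | empty => exact ⟨[], ⟨by simp, by simp⟩, by simp⟩
  | @insert x s hx ih =>
    obtain ⟨L, hL, hmem⟩ := ih
    by_cases hxX : x ∈ X
    · obtain ⟨_, G, hG⟩ := hX x hxX
      refine ⟨L ++ G, fn.pow_append hL (fn.pow_of_powerfulSeq hG), ?_⟩
      intro y hy hyX
      rcases Finset.mem_insert.1 hy with rfl | hy
      · exact List.mem_append.2 (Or.inr (by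
          have := hG.2.2.1
          have hne := hG.1
          have : G.getLast hne ∈ G := List.getLast_mem hne
          have heq : G.getLast hne = y := by
            have := hG.2.2.1
            rwa [List.getLast?_eq_getLast hne, Option.some_inj] at this
          rwa [heq] at this))
      · exact List.mem_append.2 (Or.inl (hmem y hy hyX))
    · refine ⟨L, hL, ?_⟩
      intro y hy hyX
      rcases Finset.mem_insert.1 hy with rfl | hy
      · exact absurd hyX hxX
      · exact hmem y hy hyX

lemma discardedAtt_subset_compl {X : Set α} (hsc : fn.StronglyCoherent X) :
    fn.discardedAtt X ⊆ Xᶜ := by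
  intro a ha hx
  obtain ⟨c, hc, e, he, hR⟩ := ha X hsc.2 hx
  exact hsc.1 ⟨e, he, c, hc, hR⟩

lemma deactivated_subset_compl {X : Set α} (hsc : fn.StronglyCoherent X) :
    fn.deactivated X ⊆ Xᶜ := by
  intro a ha hx
  rcases ha with ⟨e, he, hR⟩ | ⟨B, hNB, hXB⟩
  · exact hsc.1 ⟨e, he, a, hx, hR⟩
  · obtain ⟨_, G, hne, hmemG, hlast, hcond⟩ := hsc.2 a hx
    have hlen : G.length - 1 < G.length := by
      cases G with
      | nil => exact absurd rfl hne
      | cons _ _ => simp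
    have hget : G.get ⟨G.length - 1, hlen⟩ = a := by
      have h1 : G.getLast hne = a := by
        rwa [List.getLast?_eq_getLast hne, Option.some_inj] at hlast
      rw [← h1, List.getLast_eq_getElem, List.get_eq_getElem]
    obtain ⟨j, hj, _, hjB⟩ := hcond (G.length - 1) hlen B (hget ▸ hNB)
    have : G.get ⟨j, hj⟩ ∈ X ∩ B := ⟨hmemG _ (G.get_mem _), hjB⟩
    rw [hXB] at this
    exact this

lemma compl_subset_discardedAtt {X : Set α}
    (hd : fn.deactivated X = Xᶜ) : Xᶜ ⊆ fn.discardedAtt X := by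
  intro a ha C hC haC
  obtain ⟨_, G, hne, hmemG, hlast, hcond⟩ := hC a haC
  have key : ∀ i, ∀ h : i < G.length, G.get ⟨i, h⟩ ∉ X →
      ∃ c ∈ C, ∃ e ∈ X, fn.R e c := by
    intro i
    induction i using Nat.strong_induction_on with
    | _ i IH =>
      intro h hni
      have hdeact : G.get ⟨i, h⟩ ∈ fn.deactivated X := by rw [hd]; exact hni
      rcases hdeact with ⟨e, he, hR⟩ | ⟨B, hNB, hXB⟩
      · exact ⟨G.get ⟨i, h⟩, hmemG _ (G.get_mem _), e, he, hR⟩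
      · obtain ⟨j, hj, hji, hjB⟩ := hcond i h B hNB
        refine IH j hji hj ?_
        intro hjX
        have : G.get ⟨j, hj⟩ ∈ X ∩ B := ⟨hjX, hjB⟩
        rw [hXB] at this
        exact this
  have hlen : G.length - 1 < G.length := by
    cases G with
    | nil => exact absurd rfl hne
    | cons _ _ => simp
  have hget : G.get ⟨G.length - 1, hlen⟩ = a := by
    have h1 : G.getLast hne = a := by
      rwa [List.getLast?_eq_getLast hne, Option.some_inj] at hlast
    rw [← h1, List.getLast_eq_getElem, List.get_eq_getElem]
  exact key (G.length - 1) hlen (by rw [hget]; exact ha)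

lemma compl_subset_deactivated [Fintype α] {X : Set α}
    (hsc : fn.StronglyCoherent X) (hd : fn.discardedAtt X = Xᶜ) :
    Xᶜ ⊆ fn.deactivated X := by
  intro a ha
  by_contra hnd
  simp only [deactivated, Set.mem_setOf_eq, not_or, not_exists] at hnd
  obtain ⟨hnR, hnB⟩ := hnd
  have hsupp : ∀ B : Set α, fn.N B a → (X ∩ B).Nonempty := by
    intro B hB
    rcases Set.eq_empty_or_nonempty (X ∩ B) with h | h
    · exact absurd ⟨hB, h⟩ (hnB B)
    · exact h
  obtain ⟨L, hL, hLmem⟩ := fn.coherent_exists_enum hsc.2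
  -- the coherent set X ∪ {a}
  have hcoh : fn.Coherent (X ∪ {a}) := by
    intro x hx
    rcases hx with hx | hx
    · obtain ⟨_, G, hG1, hG2, hG3, hG4⟩ := hsc.2 x hx
      exact ⟨Or.inl hx, G, hG1, fun b hb => Or.inl (hG2 b hb), hG3, hG4⟩
    · rcases hx with rfl
      refine ⟨Or.inr rfl, L ++ [x], by simp, ?_, by simp, ?_⟩
      · intro b hb
        rcases List.mem_append.1 hb with h | h
        · exact Or.inl (hL.1 b h)
        · simp at h; exact Or.inr (by simp [h])
      · intro i h B hB
        have hlen : i < L.length + 1 := by simpa using h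
        by_cases hi : i < L.length
        · have hget : (L ++ [x]).get ⟨i, h⟩ = L.get ⟨i, hi⟩ := by
            simp [List.get_eq_getElem, List.getElem_append_left hi]
          rw [hget] at hB
          obtain ⟨j, hj, hji, hjB⟩ := hL.2 i hi B hB
          refine ⟨j, by simp; omega, hji, ?_⟩
          simp only [List.get_eq_getElem, List.getElem_append_left (by omega : j < L.length)]
          simpa [List.get_eq_getElem] using hjB
        · have hiL : i = L.length := by omega
          have hget : (L ++ [x]).get ⟨i, h⟩ = x := by
            subst hiL
            simp [List.get_eq_getElem, List.getElem_append_right (le_refl L.length)]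
          rw [hget] at hB
          obtain ⟨b, hbX, hbB⟩ := hsupp B hB
          obtain ⟨⟨j, hj⟩, hjb⟩ := List.get_of_mem (hLmem b hbX)
          refine ⟨j, by simp; omega, by omega, ?_⟩
          have hg : (L ++ [x]).get ⟨j, by simp; omega⟩ = L.get ⟨j, hj⟩ := by
            simp [List.get_eq_getElem, List.getElem_append_left hj]
          rw [hg, hjb]; exact hbB
  have haD : a ∈ fn.discardedAtt X := by rw [hd]; exact ha
  obtain ⟨c, hc, e, he, hR⟩ := haD (X ∪ {a}) hcoh (Or.inr rfl)
  rcases hc with hc | hc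
  · exact hsc.1 ⟨e, he, c, hc, hR⟩
  · rcases hc with rfl
    exact hnR e ⟨he, hR⟩

end AFN
end Dialectical

open Dialectical in
/-- in an AFN, `X` is stable (complete with `X⁺ = A \\ X`) iff `X` is
strongly coherent with `X^att = A \\ X`. -/
theorem afn_stable_iff_stronglyCoherent_discarded
    {α : Type} [Fintype α] (fn : AFN α) (X : Set α) :
    fn.Stable X ↔ fn.StableAtt X := by
  constructor
  · rintro ⟨hcomp, hdeact⟩
    have hsc := hcomp.1.1
    refine ⟨hsc, Set.Subset.antisymm (fn.discardedAtt_subset_compl hsc)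
      (fn.compl_subset_discardedAtt hdeact)⟩
  · rintro ⟨hsc, hdisc⟩
    have hdeact : fn.deactivated X = Xᶜ :=
      Set.Subset.antisymm (fn.deactivated_subset_compl hsc)
        (fn.compl_subset_deactivated hsc hdisc)
    refine ⟨⟨⟨hsc, ?_⟩, ?_⟩, hdeact⟩
    · intro a haX
      have hXa : X ∪ {a} = X := by
        apply Set.union_eq_self_of_subset_right
        simpa using haX
      refine ⟨by rw [hXa]; exact hsc.2, ?_⟩
      intro b hb
      by_cases hbX : b ∈ X
      · exact absurd ⟨b, hbX, a, haX, hb⟩ hsc.1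
      · rw [hdisc]; exact hbX
    · intro a ⟨hcohU, hatt⟩
      by_contra ha
      have haD : a ∈ fn.discardedAtt X := by rw [hdisc]; exact ha
      obtain ⟨c, hc, e, he, hR⟩ := haD (X ∪ {a}) hcohU (Or.inr rfl)
      rcases hc with hc | hc
      · exact hsc.1 ⟨e, he, c, hc, hR⟩
      · rcases hc with rfl
        have : e ∈ fn.discardedAtt X := hatt e hR
        rw [hdisc] at this
        exact this he
end

section
/- Let SF = (A, R) be a SETAF (or an AF) and let ADF^SF = (A, L, C) be its corresponding ADF. Then ADF^SF is an AADF⁺ and a BADF. -/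
open Classical

universe u

open Dialectical in
lemma setaf_evalCond_true {α : Type} (sf : SETAF α) (s : α) (w : Interp α) :
    sf.toADF.evalCond s w = true ↔
      ¬ ∃ S, sf.R S s ∧ S ⊆ tset w ∩ sf.toADF.par s := by
  simp [ADF.evalCond, SETAF.toADF]

open Dialectical in
lemma setaf_minDecIn_tset_empty {α : Type} (sf : SETAF α) {v : Interp α} {a : α}
    (h : sf.toADF.MinDecIn v a) : tset v = ∅ := by
  classical
  set v' : Interp α := fun b => if v b = some false then some false else none with hv'
  have htv' : tset v' = ∅ := by
    ext b; simp only [tset, Set.mem_setOf_eq, Set.mem_empty_iff_false, iff_false, v']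
    split <;> simp
  have hfv' : fset v' = fset v := by
    ext b; simp only [fset, Set.mem_setOf_eq, v']
    split <;> simp_all
  have hidom' : idom v' = fset v := by
    ext b; simp only [idom, fset, Set.mem_setOf_eq, v']
    split <;> simp_all
  have hdec' : sf.toADF.DecisivelyIn v' a := by
    intro w hw
    set S : Set α := idom v ∪ sf.toADF.par a with hS
    set w'' : Interp α := fun b =>
      if b ∈ S then (if v b = some false then some false else some true) else none
      with hw''
    have hcomp : Completion v w'' (idom v ∪ sf.toADF.par a) := by
      constructor
      · ext b
        simp only [idom, Set.mem_setOf_eq, w'']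
        by_cases hb : b ∈ S
        · simp only [hb, if_true]
          constructor
          · intro _; exact hb
          · intro _; split <;> simp
        · constructor
          · intro h'; simp only [hb, if_false] at h'; exact absurd rfl h'
          · intro h'; exact absurd h' hb
      · intro b hb
        have hbS : b ∈ S := Or.inl hb
        simp only [w'', hbS, if_true]
        simp only [idom, Set.mem_setOf_eq] at hb
        cases hvb : v b with
        | none => exact absurd hvb hb
        | some x => cases x <;> simp [hvb]
    have h1 := h.1 w'' hcomp
    rw [setaf_evalCond_true] at h1 ⊢
    intro ⟨T, hT, hTsub⟩
    apply h1
    refine ⟨T, hT, ?_⟩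
    intro b hb
    have hbp : b ∈ sf.toADF.par a := (hTsub hb).2
    have hbt : w b = some true := (hTsub hb).1
    have hbnf : ¬ v b = some false := by
      intro hvb
      have hbid : b ∈ idom v' := by
        simp [idom, v', hvb]
      have := hw.2 b hbid
      rw [hbt] at this
      simp [v', hvb] at this
    have hbS : b ∈ S := Or.inr hbp
    constructor
    · simp [tset, w'', hbS, hbnf]
    · exact hbp
  have hmin := h.2 v' hdec' (by rw [htv']; exact Set.empty_subset _)
    (by rw [hfv'])
  rw [← hmin.1, htv']

open Dialectical in
/-- the ADF corresponding to a SETAF (or AF) is an AADF⁺ and a BADF. -/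
theorem setaf_toADF_isAADFplus_and_isBADF
    {α : Type} [Fintype α] (sf : SETAF α) :
    sf.toADF.IsAADFplus ∧ sf.toADF.IsBADF := by
  constructor
  · intro X x Fs G B hPA
    obtain ⟨pd, ⟨hpdf, _⟩, hE⟩ := hPA
    obtain ⟨_, _, _, hFsX, _, _, _, _, _, _, _, hcyc, _⟩ := hE
    ext a
    simp only [Set.mem_empty_iff_false, iff_false]
    intro ha
    obtain ⟨b, hbFs, hab⟩ := hcyc a ha
    obtain ⟨v, hpdb, hav⟩ := hab
    have hmd := ((hpdf b (hFsX hbFs)).1 v hpdb).1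
    have := setaf_minDecIn_tset_empty sf hmd
    rw [this] at hav
    exact hav
  · intro r s _
    right
    rintro ⟨R', _, hfalse, htrue⟩
    simp only [SETAF.toADF, decide_eq_false_iff_not, not_not] at hfalse
    simp only [SETAF.toADF, decide_eq_true_eq] at htrue
    obtain ⟨S, hS, hSsub⟩ := hfalse
    exact htrue ⟨S, hS, hSsub.trans Set.subset_union_left⟩
end

section
/- Let SF = (A, R) be a SETAF and ADF^SF its corresponding ADF. A set of arguments X ⊆ A is a conflict-free extension of SF if and only if it is a conflict-free extension of ADF^SF. -/
open Classical

universe u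

open Dialectical in
/-- conflict-free extensions of a SETAF and of its corresponding ADF coincide. -/
theorem setaf_toADF_conflictFree
    {α : Type} [Fintype α] (sf : SETAF α) (X : Set α) :
    sf.ConflictFree X ↔ sf.toADF.ConflictFree X := by
  constructor
  · intro h s hs
    simp only [SETAF.toADF, ADF.ConflictFree, decide_eq_true_eq]
    rintro ⟨S, hRS, hSsub⟩
    exact h ⟨S, fun x hx => (hSsub hx).1, s, hs, hRS⟩
  · rintro h ⟨S, hSX, a, haX, hRa⟩
    have := h a haX
    simp only [SETAF.toADF, decide_eq_true_eq] at this
    exact this ⟨S, hRa, fun x hx => ⟨hSX hx, ⟨S, hx, hRa⟩⟩⟩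
end

section
/- Let SF = (A, R) be a SETAF and ADF^SF its corresponding ADF. If X ⊆ A is a conflict-free extension of SF (and thus of ADF^SF), then the discarded set of X in SF coincides with the standard discarded set X^+ of X in ADF^SF. -/
open Classical

universe u

namespace Dialectical

variable {α : Type u}

lemma tset_mkInterp (T F : Set α) : tset (mkInterp T F) = T := by
  ext a
  simp only [tset, mkInterp, Set.mem_setOf_eq]
  split_ifs with h1 h2 <;> simp [h1]

lemma fset_mkInterp (T F : Set α) : fset (mkInterp T F) = F \ T := by
  ext a
  simp only [fset, mkInterp, Set.mem_setOf_eq]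
  split_ifs with h1 h2 <;> simp_all

lemma idom_mkInterp (T F : Set α) : idom (mkInterp T F) = T ∪ F := by
  ext a
  simp only [idom, mkInterp, Set.mem_setOf_eq]
  split_ifs with h1 h2 <;> simp_all

lemma tset_subset_idom (v : Interp α) : tset v ⊆ idom v := by
  intro a ha; simp only [tset, Set.mem_setOf_eq] at ha
  simp [idom, ha]

lemma fset_subset_idom (v : Interp α) : fset v ⊆ idom v := by
  intro a ha; simp only [fset, Set.mem_setOf_eq] at ha
  simp [idom, ha]

/-- Attackers are sets of parents. -/
lemma attacker_subset_par (sf : SETAF α) {S : Set α} {a : α} (hS : sf.R S a) :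
    S ⊆ sf.toADF.par a := fun b hb => ⟨S, hb, hS⟩

/-- Any decisively-in interpretation for `a` must map some member of every
attacker set of `a` to f. -/
lemma hit_of_decIn (sf : SETAF α) {v : Interp α} {a : α}
    (hdec : sf.toADF.DecisivelyIn v a) {S : Set α} (hS : sf.R S a) :
    (S ∩ fset v).Nonempty := by
  by_contra hne
  rw [Set.not_nonempty_iff_eq_empty] at hne
  set w : Interp α := mkInterp (tset v ∪ S) (idom v ∪ sf.toADF.par a) with hw
  have hcomp : Completion v w (idom v ∪ sf.toADF.par a) := by
    constructor
    · rw [hw, idom_mkInterp]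
      apply Set.union_eq_self_of_subset_left
      intro b hb
      rcases hb with hb | hb
      · exact Or.inl (tset_subset_idom v hb)
      · exact Or.inr (attacker_subset_par sf hS hb)
    · intro b hb
      simp only [idom, Set.mem_setOf_eq] at hb
      rcases hvb : v b with _ | bo
      · exact absurd hvb hb
      rcases bo with _ | _
      · -- v b = some false
        have hbf : b ∈ fset v := by simp [fset, hvb]
        have hbt : b ∉ tset v ∪ S := by
          rintro (hbt | hbS)
          · simp only [tset, Set.mem_setOf_eq, hvb] at hbt; exact absurd hbt (by simp)
          · have : b ∈ S ∩ fset v := ⟨hbS, hbf⟩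
            rw [hne] at this; exact this
        have hbi : b ∈ idom v ∪ sf.toADF.par a := Or.inl (fset_subset_idom v hbf)
        simp [hw, mkInterp, hbt, hbi, hvb]
      · -- v b = some true
        have hbt : b ∈ tset v := by simp [tset, hvb]
        simp [hw, mkInterp, Set.mem_union, hbt, hvb]
  have := hdec w hcomp
  simp only [ADF.evalCond, SETAF.toADF, decide_eq_true_eq] at this
  apply this
  refine ⟨S, hS, ?_⟩
  intro b hb
  have hbt : b ∈ tset w := by rw [hw, tset_mkInterp]; exact Or.inr hb
  exact ⟨hbt, attacker_subset_par sf hS hb⟩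

/-- If `F` meets every attacker set of `a`, then setting `F` to f is decisively in. -/
lemma decIn_of_hit (sf : SETAF α) {F : Set α} {a : α}
    (hhit : ∀ S, sf.R S a → (S ∩ F).Nonempty) :
    sf.toADF.DecisivelyIn (mkInterp ∅ F) a := by
  intro w hcomp
  simp only [ADF.evalCond, SETAF.toADF, decide_eq_true_eq]
  rintro ⟨S, hS, hsub⟩
  obtain ⟨b, hbS, hbF⟩ := hhit S hS
  have hbv : mkInterp (∅ : Set α) F b = some false := by
    simp [mkInterp, hbF, Set.mem_empty_iff_false]
  have hbi : b ∈ idom (mkInterp (∅ : Set α) F) := by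
    simp [idom, hbv]
  have hwb : w b = some false := by rw [hcomp.2 b hbi, hbv]
  have : b ∈ tset w := (hsub hbS).1
  simp [tset, hwb] at this

/-- Every interpretation equals the `mkInterp` of its t- and f-sets. -/
lemma interp_eq_mkInterp (v : Interp α) : v = mkInterp (tset v) (fset v) := by
  funext b
  rcases hvb : v b with _ | bo
  · simp [mkInterp, tset, fset, hvb]
  rcases bo with _ | _ <;> simp [mkInterp, tset, fset, hvb]

/-- Existence of minimal decisively-in interpretations with falsity part inside `F0`. -/
lemma exists_minDecIn [Finite α] (sf : SETAF α) {F0 : Set α} {a : α}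
    (hhit : ∀ S, sf.R S a → (S ∩ F0).Nonempty) :
    ∃ F ⊆ F0, sf.toADF.MinDecIn (mkInterp ∅ F) a := by
  classical
  set 𝒮 : Set (Set α) := {F | F ⊆ F0 ∧ ∀ S, sf.R S a → (S ∩ F).Nonempty} with h𝒮
  have hfin : 𝒮.Finite := Set.toFinite _
  have hne : 𝒮.Nonempty := ⟨F0, le_refl _, hhit⟩
  obtain ⟨F, hFmem, hFmin⟩ : ∃ F ∈ 𝒮, ∀ F' ∈ 𝒮, id F' ≤ id F → id F = id F' := by
    obtain ⟨F, hF1, hF2⟩ := hfin.exists_minimalFor id 𝒮 hne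
    exact ⟨F, hF1, fun F' h1 h2 => le_antisymm (hF2 h1 h2) h2⟩
  refine ⟨F, hFmem.1, ?_, ?_⟩
  · exact decIn_of_hit sf hFmem.2
  · intro w hw htw hfw
    rw [tset_mkInterp] at htw
    have htw' : tset w = ∅ := Set.subset_empty_iff.mp htw
    rw [fset_mkInterp, Set.diff_empty] at hfw
    have hwmem : fset w ∈ 𝒮 := by
      refine ⟨hfw.trans hFmem.1, fun S hS => ?_⟩
      exact hit_of_decIn sf hw hS
    have := hFmin (fset w) hwmem hfw
    simp only [id_eq] at this
    rw [tset_mkInterp, fset_mkInterp, Set.diff_empty]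
    exact ⟨htw', this.symm⟩

end Dialectical

open Dialectical in
/-- for conflict-free `X`, the SETAF discarded set of `X` coincides with the
standard discarded set of `X` in the corresponding ADF. -/
theorem setaf_toADF_discarded
    {α : Type} [Fintype α] (sf : SETAF α) (X : Set α)
    (h : sf.ConflictFree X) :
    sf.discarded X = sf.toADF.stdDiscarded X := by
  classical
  ext a
  simp only [SETAF.discarded, ADF.stdDiscarded, Set.mem_setOf_eq]
  constructor
  · -- discarded ⊆ stdDiscarded
    rintro ⟨S, hSX, hSa⟩ Fs G B ⟨pd, ⟨hpdf, _⟩, hisp⟩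
    obtain ⟨hdisj, hnodup, hxu, hFsub, hGsub, hFne, hGne, hx0, hxlast, hpdT,
      hFcl, hFcyc, hB⟩ := hisp
    -- a is either in Fs or in G, and pd a is non-null
    have hmem : (a ∈ Fs ∧ pd a ≠ none) ∨ (a ∈ G ∧ pd a ≠ none) := by
      by_cases hG : G = []
      · exact Or.inl ⟨hx0 hG, hFne a (hx0 hG)⟩
      · have hlast := hxlast hG
        have haG : a ∈ G := by
          have : a ∈ G.getLast? := by rw [hlast]; rfl
          obtain ⟨hne, heq⟩ := List.mem_getLast?_eq_getLast this
          rw [heq]; exact List.getLast_mem hne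
        exact Or.inr ⟨haG, hGne a haG⟩
    have hpdne : pd a ≠ none := by rcases hmem with ⟨_, h'⟩ | ⟨_, h'⟩ <;> exact h'
    obtain ⟨v, hv⟩ := Option.ne_none_iff_exists'.mp hpdne
    have hmdi : sf.toADF.MinDecIn v a := ((hpdf a trivial).1 v hv).1
    obtain ⟨b, hbS, hbf⟩ := hit_of_decIn sf hmdi.1 hSa
    have hbpdF : b ∈ pdF pd a := ⟨v, hv, hbf⟩
    refine ⟨b, ?_, hSX hbS⟩
    rw [hB]
    rcases hmem with ⟨haF, _⟩ | ⟨haG, _⟩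
    · exact Or.inl (Set.mem_biUnion haF hbpdF)
    · exact Or.inr (Set.mem_biUnion haG hbpdF)
  · -- stdDiscarded ⊆ discarded (contrapositive)
    intro hstd
    by_contra hnd
    push_neg at hnd
    -- for each b, pick a minimal decisively-in interpretation; for a it avoids X
    have hsel : ∀ b : α, ∃ F, F ⊆ (if b = a then Xᶜ else Set.univ) ∧
        sf.toADF.MinDecIn (mkInterp ∅ F) b := by
      intro b
      by_cases hba : b = a
      · subst hba
        rw [if_pos rfl]
        apply exists_minDecIn sf
        intro S hS
        by_contra hne
        rw [Set.not_nonempty_iff_eq_empty] at hne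
        have hSX : S ⊆ X := by
          intro c hc
          by_contra hcX
          have : c ∈ S ∩ Xᶜ := ⟨hc, hcX⟩
          rw [hne] at this; exact this
        exact hnd S hSX hS
      · rw [if_neg hba]
        apply exists_minDecIn sf
        intro S hS
        obtain ⟨c, hc⟩ := sf.nonempty_of_R S _ hS
        exact ⟨c, hc, Set.mem_univ c⟩
    choose Fsel hFsub hFmdi using hsel
    set pd : α → Option (Interp α) := fun b => some (mkInterp ∅ (Fsel b)) with hpd
    have hpdFa : pdF pd a = Fsel a := by
      ext b
      simp only [pdF, Set.mem_setOf_eq, hpd, Option.some_inj]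
      constructor
      · rintro ⟨v, rfl, hbv⟩
        rwa [fset_mkInterp, Set.diff_empty] at hbv
      · intro hb
        exact ⟨_, rfl, by rwa [fset_mkInterp, Set.diff_empty]⟩
    have hpdT : ∀ b, pdT pd b = ∅ := by
      intro b
      ext c
      simp only [pdT, Set.mem_setOf_eq, hpd, Option.some_inj, Set.mem_empty_iff_false,
        iff_false]
      rintro ⟨v, rfl, hcv⟩
      rw [tset_mkInterp] at hcv
      exact hcv
    have hmax : sf.toADF.MaxSound Set.univ pd := by
      constructor
      · intro b _
        constructor
        · intro v hv
          rw [hpd, Option.some_inj] at hv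
          exact ⟨hv ▸ hFmdi b, Set.subset_univ _⟩
        · intro hnone
          simp [hpd] at hnone
      · rintro ⟨X'', pd', _, _, hss, hsub'', _⟩
        have : soundDom Set.univ pd = Set.univ := by
          ext b; simp [soundDom, hpd]
        rw [this] at hss
        exact hss.2 (hsub''.trans (Set.subset_univ _))
    have hisp : IsPAEvalWith pd Set.univ a (∅ : Set α) [a] (pdF pd a) := by
      refine ⟨by simp, by simp, Set.mem_univ a, Set.empty_subset _, ?_, ?_, ?_,
        by simp, ?_, ?_, ?_, ?_, ?_⟩
      · intro b _; exact Set.mem_univ b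
      · intro b hb; exact absurd hb (Set.notMem_empty b)
      · intro b _; simp [hpd]
      · intro _; rfl
      · intro i hi
        rw [hpdT]
        exact Set.empty_subset _
      · intro b hb; exact absurd hb (Set.notMem_empty b)
      · intro b hb; exact absurd hb (Set.notMem_empty b)
      · ext b
        simp [List.mem_singleton]
    have := hstd ∅ [a] (pdF pd a) ⟨pd, hmax, hisp⟩
    obtain ⟨b, hbB, hbX⟩ := this
    rw [hpdFa] at hbB
    have : b ∈ Xᶜ := by
      have := hFsub a hbB
      simpa using this
    exact this hbX
end

section
/- Let SF = (A, R) be a SETAF and ADF^SF its corresponding ADF. A conflict-free set of arguments X ⊆ A defends an argument a ∈ A in SF if and only if a is decisively in w.r.t. the standard range v_X of X in ADF^SF. -/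
open Classical

universe u

namespace Dialectical

section Aux

variable {α : Type} [Fintype α]

/-- Attackers are parents in the corresponding ADF. -/
lemma setaf_attack_par (sf : SETAF α) {S : Set α} {c s : α} (hS : sf.R S c) (hs : s ∈ S) :
    s ∈ sf.toADF.par c := ⟨S, hs, hS⟩

/-- Characterization of decisively in for the ADF corresponding to a SETAF. -/
lemma setaf_decIn_iff (sf : SETAF α) (v : Interp α) (c : α) :
    sf.toADF.DecisivelyIn v c ↔ ∀ S, sf.R S c → ∃ s ∈ S, v s = some false := by
  constructor
  · intro h S hS
    classical
    let w : Interp α := fun x =>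
      if x ∈ idom v then v x else if x ∈ sf.toADF.par c then some true else none
    have hwdef : ∀ x, w x =
        if x ∈ idom v then v x else if x ∈ sf.toADF.par c then some true else none :=
      fun _ => rfl
    have hcomp : Completion v w (idom v ∪ sf.toADF.par c) := by
      constructor
      · ext x
        show w x ≠ none ↔ x ∈ idom v ∪ sf.toADF.par c
        rw [hwdef, Set.mem_union]
        by_cases hx : x ∈ idom v
        · rw [if_pos hx]
          exact iff_of_true hx (Or.inl hx)
        · rw [if_neg hx]
          by_cases hp : x ∈ sf.toADF.par c
          · rw [if_pos hp]
            exact iff_of_true (by simp) (Or.inr hp)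
          · rw [if_neg hp]
            constructor
            · intro hc; exact absurd rfl hc
            · rintro (hc | hc)
              · exact absurd hc hx
              · exact absurd hc hp
      · intro x hx; rw [hwdef, if_pos hx]
    have := h w hcomp
    simp only [ADF.evalCond, SETAF.toADF, decide_eq_true_eq] at this
    by_contra hno
    push_neg at hno
    exact this ⟨S, hS, fun s hs => by
      refine ⟨?_, setaf_attack_par sf hS hs⟩
      simp only [tset, Set.mem_setOf_eq, hwdef]
      by_cases hsi : s ∈ idom v
      · simp only [if_pos hsi]
        have h1 : v s ≠ none := hsi
        have h2 : v s ≠ some false := hno s hs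
        rcases hv : v s with _ | b
        · exact absurd hv h1
        · cases b
          · exact absurd hv h2
          · rfl
      · simp [if_neg hsi, setaf_attack_par sf hS hs]⟩
  · intro h w hcomp
    simp only [ADF.evalCond, SETAF.toADF, decide_eq_true_eq]
    rintro ⟨S, hS, hsub⟩
    obtain ⟨s, hsS, hsf⟩ := h S hS
    have hsi : s ∈ idom v := by simp [idom, hsf]
    have hws : w s = v s := hcomp.2 s hsi
    have : s ∈ tset w := (hsub hsS).1
    simp only [tset, Set.mem_setOf_eq, hws, hsf] at this
    exact Bool.noConfusion (Option.some.injEq _ _ ▸ this)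

/-- Existence of minimal decisively-in interpretations with `fset` inside a hitting set. -/
lemma setaf_exists_minDecIn (sf : SETAF α) (c : α) (F0 : Set α)
    (hhit : ∀ S, sf.R S c → ∃ s ∈ S, s ∈ F0) :
    ∃ v : Interp α, sf.toADF.MinDecIn v c ∧ tset v = ∅ ∧ fset v ⊆ F0 := by
  classical
  set P : Finset α → Prop := fun F => ↑F ⊆ F0 ∧ ∀ S, sf.R S c → ∃ s ∈ S, s ∈ F with hP
  have hP0 : P (Set.toFinite F0).toFinset := by
    constructor
    · intro x hx
      simpa using hx
    · intro S hS
      obtain ⟨s, hsS, hsF⟩ := hhit S hS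
      exact ⟨s, hsS, by simpa using hsF⟩
  obtain ⟨F, hFmem, hmin⟩ := Finset.exists_min_image
    ((Finset.univ : Finset (Finset α)).filter P) Finset.card
    ⟨_, Finset.mem_filter.mpr ⟨Finset.mem_univ _, hP0⟩⟩
  have hF : P F := (Finset.mem_filter.mp hFmem).2
  refine ⟨mkInterp ∅ ↑F, ?_, ?_, ?_⟩
  · have htv : tset (mkInterp (∅ : Set α) (↑F : Set α)) = ∅ := by
      ext x
      simp only [tset, mkInterp, Set.mem_setOf_eq, Set.mem_empty_iff_false, if_false]
      by_cases hx : x ∈ (↑F : Set α) <;> simp [hx]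
    have hfv : fset (mkInterp (∅ : Set α) (↑F : Set α)) = ↑F := by
      ext x
      simp only [fset, mkInterp, Set.mem_setOf_eq, Set.mem_empty_iff_false, if_false]
      by_cases hx : x ∈ (↑F : Set α) <;> simp [hx]
    constructor
    · rw [setaf_decIn_iff]
      intro S hS
      obtain ⟨s, hsS, hsF⟩ := hF.2 S hS
      refine ⟨s, hsS, ?_⟩
      simp [mkInterp, hsF]
    · intro w hw htw hfw
      rw [htv] at htw ⊢
      rw [hfv] at hfw ⊢
      refine ⟨Set.subset_empty_iff.mp htw, ?_⟩
      have hwhit : ∀ S, sf.R S c → ∃ s ∈ S, s ∈ fset w :=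
        fun S hS => (setaf_decIn_iff sf w c).mp hw S hS
      set F' := (Set.toFinite (fset w)).toFinset with hF'
      have hF'sub : F' ⊆ F := by
        intro x hx
        have : x ∈ fset w := by simpa [hF'] using hx
        exact_mod_cast hfw this
      have hPF' : P F' := by
        constructor
        · intro x hx
          have : x ∈ fset w := by simpa [hF'] using hx
          exact hF.1 (hfw this)
        · intro S hS
          obtain ⟨s, hsS, hsf⟩ := hwhit S hS
          exact ⟨s, hsS, by simpa [hF'] using hsf⟩
      have hcard : F.card ≤ F'.card :=
        hmin F' (Finset.mem_filter.mpr ⟨Finset.mem_univ _, hPF'⟩)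
      have : F' = F := Finset.eq_of_subset_of_card_le hF'sub hcard
      rw [← this, hF']
      exact ((Set.toFinite (fset w)).coe_toFinset).symm
  · ext x
    simp only [tset, mkInterp, Set.mem_setOf_eq, Set.mem_empty_iff_false, if_false]
    by_cases hx : x ∈ (↑F : Set α) <;> simp [hx]
  · intro x hx
    simp only [fset, mkInterp, Set.mem_setOf_eq, Set.mem_empty_iff_false, if_false] at hx
    by_cases hxF : x ∈ (↑F : Set α)
    · exact hF.1 hxF
    · simp [hxF] at hx

/-- Any everywhere-defined choice of minimal decisively-in interpretations is
a maximally sound pd-function on `univ`. -/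
lemma setaf_maxSound_of_choice (sf : SETAF α) (f : α → Interp α)
    (hf : ∀ c, sf.toADF.MinDecIn (f c) c) :
    sf.toADF.MaxSound Set.univ (fun c => some (f c)) := by
  constructor
  · intro a _
    refine ⟨fun v hv => ?_, fun hn => by simp at hn⟩
    have : v = f a := by simpa using hv.symm
    exact ⟨this ▸ hf a, Set.subset_univ _⟩
  · rintro ⟨X'', pd', _, _, hss, hsub, _⟩
    have hsd : soundDom Set.univ (fun c => some (f c)) = Set.univ := by
      ext x; simp [soundDom]
    rw [hsd] at hss
    exact hss.2 (fun x _ => Set.mem_univ x)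

/-- The SETAF discarded set is contained in the standard discarded set. -/
lemma setaf_discarded_subset_std (sf : SETAF α) (X : Set α) :
    sf.discarded X ⊆ sf.toADF.stdDiscarded X := by
  rintro b ⟨T, hTX, hRT⟩ Fs G B ⟨pd, hms, hpa⟩
  obtain ⟨h1, h2, h3, h4, h5, h6, h7, h8, h9, h10, h11a, h11b, h12⟩ := hpa
  have hbmem : b ∈ Fs ∨ b ∈ G := by
    by_cases hG : G = []
    · exact Or.inl (h8 hG)
    · exact Or.inr (List.mem_of_mem_getLast? (h9 hG))
  have hbnone : pd b ≠ none := by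
    rcases hbmem with hb | hb
    · exact h6 b hb
    · exact h7 b hb
  obtain ⟨v, hv⟩ := Option.ne_none_iff_exists'.mp hbnone
  have hmdi : sf.toADF.MinDecIn v b := ((hms.1 b (Set.mem_univ b)).1 v hv).1
  obtain ⟨t, htT, htf⟩ := (setaf_decIn_iff sf v b).mp hmdi.1 T hRT
  have htpdF : t ∈ pdF pd b := ⟨v, hv, htf⟩
  have htB : t ∈ B := by
    rw [h12]
    rcases hbmem with hb | hb
    · exact Or.inl (Set.mem_biUnion hb htpdF)
    · exact Or.inr (Set.mem_biUnion hb htpdF)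
  exact ⟨t, htB, hTX htT⟩

/-- If `b` is not in the SETAF discarded set, it is not in the standard discarded set. -/
lemma setaf_not_std_of_not_discarded (sf : SETAF α) (X : Set α) (b : α)
    (hb : b ∉ sf.discarded X) : b ∉ sf.toADF.stdDiscarded X := by
  classical
  have hall : ∀ c : α, ∃ v : Interp α, sf.toADF.MinDecIn v c ∧ tset v = ∅ ∧
      fset v ⊆ (if c = b then Xᶜ else Set.univ) := by
    intro c
    by_cases hc : c = b
    · subst hc
      simp only [if_pos rfl]
      apply setaf_exists_minDecIn
      intro S hS
      by_contra hno
      push_neg at hno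
      exact hb ⟨S, fun s hs => by simpa using hno s hs, hS⟩
    · simp only [if_neg hc]
      apply setaf_exists_minDecIn
      intro S hS
      obtain ⟨s, hs⟩ := sf.nonempty_of_R S c hS
      exact ⟨s, hs, Set.mem_univ s⟩
  choose f hf1 hf2 hf3 using hall
  set pd : α → Option (Interp α) := fun c => some (f c) with hpd
  have hms : sf.toADF.MaxSound Set.univ pd := setaf_maxSound_of_choice sf f hf1
  have hpdT : ∀ c, pdT pd c = ∅ := by
    intro c
    ext x
    simp only [pdT, Set.mem_setOf_eq, hpd, Option.some.injEq, Set.mem_empty_iff_false,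
      iff_false, not_exists]
    rintro v ⟨hv, hx⟩
    rw [← hv] at hx
    rw [hf2 c] at hx
    exact hx
  have hpdF : ∀ c, pdF pd c = fset (f c) := by
    intro c
    ext x
    simp only [pdF, Set.mem_setOf_eq, hpd, Option.some.injEq]
    constructor
    · rintro ⟨v, hv, hx⟩; rwa [← hv] at hx
    · intro hx; exact ⟨f c, rfl, hx⟩
  intro hstd
  have hpa : sf.toADF.PAEval Set.univ b ∅ [b]
      ((⋃ a ∈ (∅ : Set α), pdF pd a) ∪ ⋃ a ∈ {c | c ∈ [b]}, pdF pd a) := by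
    refine ⟨pd, hms, ?_, ?_, ?_, ?_, ?_, ?_, ?_, ?_, ?_, ?_, ?_, ?_, rfl⟩
    · intro a _; simp
    · simp
    · exact Set.mem_univ b
    · exact Set.empty_subset _
    · intro a _; exact Set.mem_univ a
    · intro a ha; simp at ha
    · intro a _; simp [hpd]
    · intro h'; simp at h'
    · intro _; simp
    · intro i hi
      rw [hpdT]
      exact Set.empty_subset _
    · intro a ha; simp at ha
    · intro a ha; simp at ha
  obtain ⟨t, htB, htX⟩ := hstd ∅ [b] _ hpa
  have : t ∈ fset (f b) := by
    simp only [Set.mem_union, Set.mem_iUnion, Set.mem_empty_iff_false, exists_prop,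
      false_and, exists_false, false_or, Set.mem_setOf_eq, List.mem_singleton] at htB
    obtain ⟨a, ha, hta⟩ := htB
    rw [ha] at hta
    rwa [hpdF] at hta
  have := hf3 b this
  simp only [if_pos rfl, Set.mem_compl_iff] at this
  exact this htX

/-- For conflict-free `X`, `stdRange X s = some false ↔ s ∈ discarded X`. -/
lemma setaf_stdRange_false_iff (sf : SETAF α) (X : Set α)
    (hcf : sf.ConflictFree X) (s : α) :
    sf.toADF.stdRange X s = some false ↔ s ∈ sf.discarded X := by
  classical
  have hdisj : s ∈ sf.discarded X → s ∉ X := by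
    rintro ⟨T, hTX, hRT⟩ hsX
    exact hcf ⟨T, hTX, s, hsX, hRT⟩
  simp only [ADF.stdRange, mkInterp]
  by_cases hsX : s ∈ X
  · simp only [if_pos hsX]
    constructor
    · intro h'; exact absurd h' (by simp)
    · intro h'; exact absurd hsX (hdisj h')
  · simp only [if_neg hsX]
    by_cases hsd : s ∈ sf.toADF.stdDiscarded X \ X
    · simp only [if_pos hsd, true_iff]
      by_contra hnd
      exact setaf_not_std_of_not_discarded sf X s hnd hsd.1
    · simp only [if_neg hsd]
      constructor
      · intro h'; exact absurd h' (by simp)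
      · intro h'
        exact absurd ⟨setaf_discarded_subset_std sf X h', hsX⟩ hsd

end Aux

end Dialectical

open Dialectical in
/-- a conflict-free set defends `a` in the SETAF iff `a` is decisively in
w.r.t. the standard range of `X` in the corresponding ADF. -/
theorem setaf_toADF_defends_iff_decisivelyIn
    {α : Type} [Fintype α] (sf : SETAF α) (X : Set α)
    (h : sf.ConflictFree X) (a : α) :
    sf.Defends X a ↔ sf.toADF.DecisivelyIn (sf.toADF.stdRange X) a := by
  rw [setaf_decIn_iff]
  constructor
  · intro hd S hS
    obtain ⟨s, hsS, hsd⟩ := hd S hS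
    exact ⟨s, hsS, (setaf_stdRange_false_iff sf X h s).mpr hsd⟩
  · intro hd S hS
    obtain ⟨s, hsS, hsd⟩ := hd S hS
    exact ⟨s, hsS, (setaf_stdRange_false_iff sf X h s).mp hsd⟩
end
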